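/- Let R be a p × n matrix of natural numbers and let π : ℂⁿ → ℂᵖ be the monomial map defined by π(x)_i = ∏_{j=1}^n x_j^{R_{i,j}}. Then for every x ∈ ℂⁿ with x_j ≠ 0 for all j, π is complex-differentiable at x and the rank of its derivative at x (the complex dimension of the range of the ℂ-linear map fderiv ℂ π x) equals the rank of R regarded as a matrix with complex entries. In particular π has constant rank on the complement of the coordinate hyperplanes. -/

import Mathlib

/-- The monomial map `π(x)_i = ∏_j x_j^{R_{i,j}}` is complex differentiable at any point
with all coordinates nonzero, and the rank of its derivative there equals the rank of the
exponent matrix `R` (viewed as a complex matrix). -/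
theorem stmt_2 (p n : ℕ) (R : Matrix (Fin p) (Fin n) ℕ)
    (π : (Fin n → ℂ) → (Fin p → ℂ)) (hπ : ∀ x i, π x i = ∏ j, x j ^ R i j)
    (x : Fin n → ℂ) (hx : ∀ j, x j ≠ 0) :
    DifferentiableAt ℂ π x ∧
      Module.finrank ℂ (LinearMap.range (fderiv ℂ π x : (Fin n → ℂ) →ₗ[ℂ] (Fin p → ℂ))) =
        (R.map fun a => (a : ℂ)).rank := by
  classical
  set c : Fin p → ℂ := fun i => ∏ k, x k ^ R i k with hc
  have hc0 : ∀ i, c i ≠ 0 := fun i =>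
    Finset.prod_ne_zero_iff.mpr fun j _ => pow_ne_zero _ (hx j)
  set M : Matrix (Fin p) (Fin n) ℂ := fun i j => (R i j : ℂ) * c i / x j with hM
  -- the derivative
  have hd : HasFDerivAt π (LinearMap.toContinuousLinearMap M.mulVecLin) x := by
    rw [hasFDerivAt_pi']
    intro i
    have hfun : (fun y : Fin n → ℂ => π y i) = fun y => ∏ j, (fun z : Fin n → ℂ => z j ^ R i j) y := by
      funext y; simpa using hπ y i
    have h1 : ∀ j : Fin n, HasFDerivAt (fun z : Fin n → ℂ => z j ^ R i j)
        (((R i j : ℂ) * x j ^ (R i j - 1)) • (ContinuousLinearMap.proj j : ((Fin n → ℂ)) →L[ℂ] ℂ)) x := by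
      intro j
      exact (hasDerivAt_pow (R i j) (x j)).comp_hasFDerivAt x
        (hasFDerivAt_apply j x)
    have h2 := HasFDerivAt.finset_prod (u := Finset.univ) (fun j _ => h1 j)
    rw [← hfun] at h2
    refine h2.congr_fderiv ?_
    refine ContinuousLinearMap.ext fun v => ?_
    simp only [ContinuousLinearMap.sum_apply, ContinuousLinearMap.smul_apply,
      ContinuousLinearMap.proj_apply, ContinuousLinearMap.coe_comp', Function.comp_apply,
      LinearMap.coe_toContinuousLinearMap', Matrix.mulVecLin_apply, Matrix.mulVec,
      dotProduct]
    refine Finset.sum_congr rfl fun j _ => ?_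
    rcases Nat.eq_zero_or_pos (R i j) with h0 | hpos
    · simp [hM, h0]
    · have hprod : c i = x j ^ R i j * ∏ k ∈ Finset.univ.erase j, x k ^ R i k :=
        (Finset.mul_prod_erase Finset.univ (fun k => x k ^ R i k) (Finset.mem_univ j)).symm
      obtain ⟨m, hm⟩ := Nat.exists_eq_add_of_lt hpos
      simp only [hM, hprod]
      rw [hm]
      simp only [Nat.zero_add, Nat.add_sub_cancel]
      field_simp [hx j]
      ring
  have hfd : fderiv ℂ π x = LinearMap.toContinuousLinearMap M.mulVecLin := hd.fderiv
  refine ⟨hd.differentiableAt, ?_⟩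
  rw [hfd]
  have hr1 : LinearMap.range (LinearMap.toContinuousLinearMap M.mulVecLin : (Fin n → ℂ) →ₗ[ℂ] (Fin p → ℂ)) =
      LinearMap.range M.mulVecLin := by
    ext v; simp [LinearMap.mem_range]
  rw [hr1]
  show M.rank = _
  -- now show M.rank = rank of R mapped to ℂ
  have hMeq : M = Matrix.diagonal c * ((R.map fun a => (a : ℂ)) *
      Matrix.diagonal fun j => (x j)⁻¹) := by
    ext i j
    simp [hM, Matrix.mul_apply, Matrix.diagonal, Finset.sum_ite_eq, Finset.sum_ite_eq',
      Matrix.map_apply, div_eq_mul_inv]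
    ring
  rw [hMeq, Matrix.rank_mul_eq_right_of_isUnit_det _ _ (by
      simp only [Matrix.det_diagonal]
      exact (Finset.prod_ne_zero_iff.mpr fun i _ => hc0 i).isUnit),
    Matrix.rank_mul_eq_left_of_isUnit_det _ _ (by
      simp only [Matrix.det_diagonal]
      exact (Finset.prod_ne_zero_iff.mpr fun j _ => inv_ne_zero (hx j)).isUnit)]
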